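/- For n ∈ Z and ε ∈ R, the function v^{(n)}(x; ε) = ( (1 + √(1+ε^2)) e^{inx}, -iε e^{i(n+1)x} ) is a 2π-periodic eigenfunction of the operator W̃(ε) = -i σ3 d/dx - (ε^2/4) I + (iε/2)[B(x) d/dx + d/dx B(x)], where B(x) = [[0, -i e^{-ix}],[i e^{ix}, 0]] and σ3 = [[1,0],[0,-1]], with eigenvalue λ_n(ε) = -1/2 - ε^2/4 + √(1+ε^2)(n + 1/2). -/

import Mathlib

open scoped Real

/-- The matrix function `B(x) = [[0, -i e^{-ix}],[i e^{ix}, 0]]`. -/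
noncomputable def Bmat (x : ℝ) : Matrix (Fin 2) (Fin 2) ℂ :=
  !![0, -Complex.I * Complex.exp (-Complex.I * x);
     Complex.I * Complex.exp (Complex.I * x), 0]

/-- The operator `W̃(ε) = -i σ₃ d/dx - (ε²/4) I + (iε/2)(B d/dx + d/dx B)` of Section 8. -/
noncomputable def Wtilde (ε : ℝ) (v : ℝ → Fin 2 → ℂ) (x : ℝ) (i : Fin 2) : ℂ :=
  -Complex.I * (∑ j, (!![1, 0; 0, -1] : Matrix (Fin 2) (Fin 2) ℂ) i j * deriv (fun t => v t j) x)
    - ((ε ^ 2 / 4 : ℝ) : ℂ) * v x i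
    + (Complex.I * (ε : ℂ) / 2) *
        ((∑ j, Bmat x i j * deriv (fun t => v t j) x) +
          deriv (fun t => ∑ j, Bmat t i j * v t j) x)

/-- The explicit eigenfunction `v⁽ⁿ⁾(x; ε) = ((1+√(1+ε²)) e^{inx}, -iε e^{i(n+1)x})`. -/
noncomputable def vn (n : ℤ) (ε : ℝ) (x : ℝ) : Fin 2 → ℂ :=
  ![((1 + Real.sqrt (1 + ε ^ 2) : ℝ) : ℂ) * Complex.exp (Complex.I * (n : ℂ) * (x : ℂ)),
    -Complex.I * (ε : ℂ) * Complex.exp (Complex.I * ((n : ℂ) + 1) * (x : ℂ))]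

lemma hasDerivAt_aexp (a k : ℂ) (x : ℝ) :
    HasDerivAt (fun t : ℝ => a * Complex.exp (k * (t : ℂ))) (a * k * Complex.exp (k * (x : ℂ))) x := by
  have h : HasDerivAt (fun z : ℂ => a * Complex.exp (k * z)) (a * k * Complex.exp (k * (x : ℂ))) (x : ℂ) := by
    have h0 := (((hasDerivAt_id (x : ℂ)).const_mul k).cexp).const_mul a
    simp only [id_eq] at h0
    rw [show a * k * Complex.exp (k * (x : ℂ)) = a * (Complex.exp (k * (x : ℂ)) * (k * 1)) by ring]
    exact h0
  exact h.comp_ofReal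

/-- `v⁽ⁿ⁾` is a `2π`-periodic eigenfunction of `W̃(ε)` with eigenvalue
`λₙ(ε) = -1/2 - ε²/4 + √(1+ε²)(n + 1/2)`. -/
theorem vn_is_eigenfunction (n : ℤ) (ε : ℝ) :
    (∀ x, vn n ε (x + 2 * π) = vn n ε x) ∧
    ∀ x i, Wtilde ε (vn n ε) x i =
      ((-1 / 2 - ε ^ 2 / 4 + Real.sqrt (1 + ε ^ 2) * ((n : ℝ) + 1 / 2) : ℝ) : ℂ) *
        vn n ε x i := by
  have hs : ((Real.sqrt (1 + ε ^ 2) : ℝ) : ℂ) ^ 2 = 1 + (ε : ℂ) ^ 2 := by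
    rw [← Complex.ofReal_pow, Real.sq_sqrt (by positivity)]
    push_cast; ring
  constructor
  · intro x
    have hp1 : Complex.exp (Complex.I * (n : ℂ) * ((x + 2 * π : ℝ) : ℂ)) =
        Complex.exp (Complex.I * (n : ℂ) * (x : ℂ)) := by
      rw [show Complex.I * (n : ℂ) * ((x + 2 * π : ℝ) : ℂ) =
          Complex.I * (n : ℂ) * (x : ℂ) + (n : ℂ) * (2 * π * Complex.I) by push_cast; ring,
        Complex.exp_add, Complex.exp_int_mul_two_pi_mul_I, mul_one]
    have hp2 : Complex.exp (Complex.I * ((n : ℂ) + 1) * ((x + 2 * π : ℝ) : ℂ)) =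
        Complex.exp (Complex.I * ((n : ℂ) + 1) * (x : ℂ)) := by
      rw [show Complex.I * ((n : ℂ) + 1) * ((x + 2 * π : ℝ) : ℂ) =
          Complex.I * ((n : ℂ) + 1) * (x : ℂ) + ((n + 1 : ℤ) : ℂ) * (2 * π * Complex.I) by
            push_cast; ring,
        Complex.exp_add, Complex.exp_int_mul_two_pi_mul_I, mul_one]
    funext i
    simp only [vn]
    rw [hp1, hp2]
  · intro x i
    have hfun0 : (fun t : ℝ => vn n ε t 0) =
        fun t : ℝ => ((1 + Real.sqrt (1 + ε ^ 2) : ℝ) : ℂ) *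
          Complex.exp (Complex.I * (n : ℂ) * (t : ℂ)) := by
      funext t; simp only [vn, Matrix.cons_val_zero]
    have hfun1 : (fun t : ℝ => vn n ε t 1) =
        fun t : ℝ => (-Complex.I * (ε : ℂ)) * Complex.exp (Complex.I * ((n : ℂ) + 1) * (t : ℂ)) := by
      funext t; simp only [vn, Matrix.cons_val_one, Matrix.head_cons, Matrix.cons_val_zero]
    have e0 : deriv (fun t : ℝ => vn n ε t 0) x =
        ((1 + Real.sqrt (1 + ε ^ 2) : ℝ) : ℂ) * (Complex.I * (n : ℂ)) *
          Complex.exp (Complex.I * (n : ℂ) * (x : ℂ)) := by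
      rw [hfun0]; exact (hasDerivAt_aexp _ _ x).deriv
    have e1 : deriv (fun t : ℝ => vn n ε t 1) x =
        (-Complex.I * (ε : ℂ)) * (Complex.I * ((n : ℂ) + 1)) *
          Complex.exp (Complex.I * ((n : ℂ) + 1) * (x : ℂ)) := by
      rw [hfun1]; exact (hasDerivAt_aexp _ _ x).deriv
    have hB0 : (fun t : ℝ => Bmat t 0 0 * vn n ε t 0 + Bmat t 0 1 * vn n ε t 1) =
        fun t : ℝ => (-(ε : ℂ)) * Complex.exp (Complex.I * (n : ℂ) * (t : ℂ)) := by
      funext t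
      simp only [Fin.sum_univ_two, Bmat, vn, Matrix.cons_val_zero, Matrix.cons_val_one,
        Matrix.head_cons, Matrix.of_apply, Matrix.cons_val', Matrix.empty_val',
        Matrix.cons_val_fin_one, Matrix.head_fin_const, zero_mul, zero_add]
      rw [show Complex.I * (n : ℂ) * (t : ℂ) =
          -Complex.I * (t : ℂ) + Complex.I * ((n : ℂ) + 1) * (t : ℂ) by ring, Complex.exp_add]
      linear_combination ((ε : ℂ) * Complex.exp (-Complex.I * (t : ℂ)) *
        Complex.exp (Complex.I * ((n : ℂ) + 1) * (t : ℂ))) * Complex.I_sq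
    have hB1 : (fun t : ℝ => Bmat t 1 0 * vn n ε t 0 + Bmat t 1 1 * vn n ε t 1) =
        fun t : ℝ => (Complex.I * ((1 + Real.sqrt (1 + ε ^ 2) : ℝ) : ℂ)) *
          Complex.exp (Complex.I * ((n : ℂ) + 1) * (t : ℂ)) := by
      funext t
      simp only [Fin.sum_univ_two, Bmat, vn, Matrix.cons_val_zero, Matrix.cons_val_one,
        Matrix.head_cons, Matrix.of_apply, Matrix.cons_val', Matrix.empty_val',
        Matrix.cons_val_fin_one, Matrix.head_fin_const, mul_zero, zero_mul, add_zero]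
      rw [show Complex.I * ((n : ℂ) + 1) * (t : ℂ) =
          Complex.I * (t : ℂ) + Complex.I * (n : ℂ) * (t : ℂ) by ring, Complex.exp_add]
      ring
    have eB0 : deriv (fun t : ℝ => Bmat t 0 0 * vn n ε t 0 + Bmat t 0 1 * vn n ε t 1) x =
        (-(ε : ℂ)) * (Complex.I * (n : ℂ)) * Complex.exp (Complex.I * (n : ℂ) * (x : ℂ)) := by
      rw [hB0]; exact (hasDerivAt_aexp _ _ x).deriv
    have eB1 : deriv (fun t : ℝ => Bmat t 1 0 * vn n ε t 0 + Bmat t 1 1 * vn n ε t 1) x =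
        (Complex.I * ((1 + Real.sqrt (1 + ε ^ 2) : ℝ) : ℂ)) * (Complex.I * ((n : ℂ) + 1)) *
          Complex.exp (Complex.I * ((n : ℂ) + 1) * (x : ℂ)) := by
      rw [hB1]; exact (hasDerivAt_aexp _ _ x).deriv
    have hE1 : Complex.exp (-Complex.I * (x : ℂ)) *
        Complex.exp (Complex.I * ((n : ℂ) + 1) * (x : ℂ)) =
        Complex.exp (Complex.I * (n : ℂ) * (x : ℂ)) := by
      rw [← Complex.exp_add]; congr 1; ring
    have hE2 : Complex.exp (Complex.I * (x : ℂ)) *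
        Complex.exp (Complex.I * (n : ℂ) * (x : ℂ)) =
        Complex.exp (Complex.I * ((n : ℂ) + 1) * (x : ℂ)) := by
      rw [← Complex.exp_add]; congr 1; ring
    set S : ℂ := ((Real.sqrt (1 + ε ^ 2) : ℝ) : ℂ) with hS
    set E1 : ℂ := Complex.exp (Complex.I * (n : ℂ) * (x : ℂ)) with hE1def
    set B : ℂ := Complex.exp (Complex.I * ((n : ℂ) + 1) * (x : ℂ)) with hBdef
    set A : ℂ := Complex.exp (-Complex.I * (x : ℂ)) with hAdef
    set C : ℂ := Complex.exp (Complex.I * (x : ℂ)) with hCdef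
    fin_cases i
    · simp only [Wtilde, Fin.sum_univ_two, Fin.zero_eta, Fin.isValue]
      rw [e0, e1, eB0]
      simp only [Bmat, vn, Matrix.cons_val_zero, Matrix.cons_val_one, Matrix.head_cons,
        Matrix.of_apply, Matrix.cons_val', Matrix.empty_val', Matrix.cons_val_fin_one,
        Matrix.head_fin_const]
      push_cast
      linear_combination
        (-(E1 * (n : ℂ)) - E1 * (ε : ℂ) ^ 2 * (n : ℂ) / 2 -
            A * B * (ε : ℂ) ^ 2 * ((n : ℂ) + 1) / 2 - S * E1 * (n : ℂ) +
            Complex.I ^ 2 * A * B * (ε : ℂ) ^ 2 * ((n : ℂ) + 1) / 2) * Complex.I_sq +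
          (-(E1 / 2) - E1 * (n : ℂ)) * hs + ((ε : ℂ) ^ 2 * ((n : ℂ) + 1) / 2) * hE1
    · simp only [Wtilde, Fin.sum_univ_two, Fin.mk_one, Fin.isValue]
      rw [e0, e1, eB1]
      simp only [Bmat, vn, Matrix.cons_val_zero, Matrix.cons_val_one, Matrix.head_cons,
        Matrix.of_apply, Matrix.cons_val', Matrix.empty_val', Matrix.cons_val_fin_one,
        Matrix.head_fin_const]
      push_cast
      linear_combination
        (Complex.I * C * E1 * (ε : ℂ) * (n : ℂ) / 2 -
            Complex.I * B * (ε : ℂ) * ((n : ℂ) + 1) / 2 +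
            Complex.I * S * C * E1 * (ε : ℂ) * (n : ℂ) / 2 +
            Complex.I * S * B * (ε : ℂ) * ((n : ℂ) + 1) / 2) * Complex.I_sq +
          (-(Complex.I * (ε : ℂ) * (n : ℂ) * (1 + S) / 2)) * hE2
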